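/- Let p be an odd prime with -1 not a power of 2 modulo p. Define a graph G whose vertices are ordered pairs (x,y) of distinct elements of Z/pZ, where (x,y) is adjacent to (y,x), to ((x+y)/2, x), and to (y, 2x - y). Then G is bipartite. -/
import Mathlib


def pairGraph (p : ℕ) [Fact p.Prime] :
    SimpleGraph {v : ZMod p × ZMod p // v.1 ≠ v.2} :=
  SimpleGraph.fromRel (fun u v =>
    v.val = (u.val.2, u.val.1) ∨
    v.val = ((u.val.1 + u.val.2) / 2, u.val.1) ∨
    v.val = (u.val.2, 2 * u.val.1 - u.val.2))

theorem pairGraph_bipartite (p : ℕ) [hp : Fact p.Prime] (hodd : p ≠ 2)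
    (h2 : ∀ r : ℕ, (2 : ZMod p) ^ r ≠ -1) :
    (pairGraph p).Colorable 2 := by
  classical
  have h2ne : (2 : ZMod p) ≠ 0 := by
    intro h
    have hd : p ∣ 2 := by
      have : ((2 : ℕ) : ZMod p) = 0 := by exact_mod_cast h
      exact (ZMod.natCast_eq_zero_iff 2 p).mp this
    exact hodd ((Nat.prime_dvd_prime_iff_eq hp.out Nat.prime_two).mp hd)
  set u2 : (ZMod p)ˣ := Units.mk0 (2 : ZMod p) h2ne with hu2
  set m1 : (ZMod p)ˣ := -1 with hm1
  -- -1 is not an integer power of 2 among units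
  have hm1pow : ∀ k : ℤ, u2 ^ k ≠ m1 := by
    intro k hk
    have hinv : m1⁻¹ = m1 := by simp [hm1]
    have hnat : u2 ^ (k.natAbs : ℤ) = m1 := by
      rcases Int.natAbs_eq k with h1 | h1
      · rw [← h1]; exact hk
      · have h3 : u2 ^ (-(k.natAbs : ℤ)) = m1 := by rw [← h1]; exact hk
        have h4 : (u2 ^ ((k.natAbs : ℤ)))⁻¹ = m1 := by rw [← zpow_neg]; exact h3
        calc u2 ^ ((k.natAbs : ℤ)) = m1⁻¹ := by rw [← h4, inv_inv]
          _ = m1 := hinv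
    have : (2 : ZMod p) ^ k.natAbs = -1 := by
      have := congrArg (Units.val) hnat
      rw [zpow_natCast] at this
      simpa [hu2, hm1] using this
    exact h2 k.natAbs this
  -- the setoid "differ by a power of 2"
  set σ : Setoid (ZMod p)ˣ :=
    ⟨fun a b => ∃ k : ℤ, a = u2 ^ k * b, by
      constructor
      · intro a; exact ⟨0, by rw [zpow_zero, one_mul]⟩
      · rintro a b ⟨k, hk⟩
        exact ⟨-k, by rw [hk, ← mul_assoc, zpow_neg, inv_mul_cancel, one_mul]⟩
      · rintro a b c ⟨k, hk⟩ ⟨l, hl⟩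
        exact ⟨k + l, by rw [hk, hl, ← mul_assoc, zpow_add]⟩⟩ with hσ
  -- the "multiply by -1" involution on the quotient
  set φ : Quotient σ → Quotient σ :=
    Quotient.map (fun a => m1 * a) (by
      rintro a b ⟨k, hk⟩
      exact ⟨k, by rw [hk]; exact mul_left_comm m1 (u2 ^ k) b⟩) with hφ
  have hφφ : ∀ q, φ (φ q) = q := by
    intro q
    induction q using Quotient.inductionOn with
    | h a =>
      show Quotient.mk σ (m1 * (m1 * a)) = Quotient.mk σ a
      rw [← mul_assoc]
      have : m1 * m1 = 1 := by simp [hm1]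
      rw [this, one_mul]
  have hφne : ∀ q, φ q ≠ q := by
    intro q
    induction q using Quotient.inductionOn with
    | h a =>
      intro habs
      have hrel : σ.r (m1 * a) a := Quotient.exact habs
      obtain ⟨k, hk⟩ := hrel
      have hk' : m1 * a = u2 ^ k * a := hk
      exact hm1pow k (mul_right_cancel hk').symm
  -- the pairing setoid on the quotient
  set σ2 : Setoid (Quotient σ) :=
    ⟨fun q q' => q' = q ∨ q' = φ q, by
      constructor
      · intro q; exact Or.inl rfl
      · rintro a b (h | h)
        · exact Or.inl h.symm
        · right; rw [h, hφφ]
      · rintro a b c (h | h) h2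
        · rw [h] at h2; exact h2
        · rw [h] at h2
          rcases h2 with h2 | h2
          · exact Or.inr h2
          · rw [hφφ] at h2; exact Or.inl h2⟩ with hσ2
  set rep : Quotient σ → Quotient σ := fun q => (Quotient.mk σ2 q).out with hrep
  have hrep_spec : ∀ q, rep q = q ∨ rep q = φ q := by
    intro q
    have hout : Quotient.mk σ2 ((Quotient.mk σ2 q).out) = Quotient.mk σ2 q :=
      Quotient.out_eq _
    have hr : σ2.r (rep q) q := by
      rw [hrep]
      exact Quotient.exact hout
    rcases hr with h | h
    · exact Or.inl h.symm
    · exact Or.inr (((congrArg φ h).trans (hφφ _)).symm)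
  have hrep_φ : ∀ q, rep (φ q) = rep q := by
    intro q
    have : Quotient.mk σ2 (φ q) = Quotient.mk σ2 q := by
      apply Quotient.sound
      show q = φ q ∨ q = φ (φ q)
      exact Or.inr (hφφ q).symm
    show (Quotient.mk σ2 (φ q)).out = (Quotient.mk σ2 q).out
    rw [this]
  set g : Quotient σ → Bool := fun q => decide (q = rep q) with hg
  have gflip : ∀ q, g (φ q) ≠ g q := by
    intro q
    rcases hrep_spec q with h | h
    · have h1 : g q = true := by
        simp only [hg, decide_eq_true_eq]; exact h.symm
      have h2' : g (φ q) = false := by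
        simp only [hg, decide_eq_false_iff_not]
        rw [hrep_φ, h]
        intro habs
        exact hφne q habs
      rw [h1, h2']; simp
    · have h1 : g q = false := by
        simp only [hg, decide_eq_false_iff_not]
        rw [h]
        intro habs
        exact hφne q habs.symm
      have h2' : g (φ q) = true := by
        simp only [hg, decide_eq_true_eq]
        rw [hrep_φ, h]
      rw [h1, h2']; simp
  -- main flip lemma at the level of units
  have flip : ∀ (a b : (ZMod p)ˣ) (k : ℤ), a = m1 * u2 ^ k * b →
      g (Quotient.mk σ a) ≠ g (Quotient.mk σ b) := by
    intro a b k hab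
    have h1 : Quotient.mk σ a = φ (Quotient.mk σ b) := by
      have h2' : Quotient.mk σ a = Quotient.mk σ (m1 * b) := by
        apply Quotient.sound
        exact ⟨k, by rw [hab, mul_comm m1 (u2 ^ k), mul_assoc]⟩
      rw [h2']
      rfl
    rw [h1]
    exact gflip _
  -- the coloring
  set du : {v : ZMod p × ZMod p // v.1 ≠ v.2} → (ZMod p)ˣ :=
    fun v => Units.mk0 (v.val.1 - v.val.2) (sub_ne_zero.mpr v.2) with hdu
  set c : {v : ZMod p × ZMod p // v.1 ≠ v.2} → Bool :=
    fun v => g (Quotient.mk σ (du v)) with hc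
  have key : ∀ u v, (pairGraph p).Adj u v → c u ≠ c v := by
    intro u v hadj
    rw [pairGraph, SimpleGraph.fromRel_adj] at hadj
    obtain ⟨hne, hrel⟩ := hadj
    have main : ∀ w z : {v : ZMod p × ZMod p // v.1 ≠ v.2},
        (z.val = (w.val.2, w.val.1) ∨
         z.val = ((w.val.1 + w.val.2) / 2, w.val.1) ∨
         z.val = (w.val.2, 2 * w.val.1 - w.val.2)) → c z ≠ c w := by
      intro w z hz
      rcases hz with h | h | h
      · refine flip _ _ 0 (Units.ext ?_)
        have h1 : z.val.1 = w.val.2 := by rw [h]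
        have h2' : z.val.2 = w.val.1 := by rw [h]
        simp [hdu, hu2, hm1, h1, h2']
      · refine flip _ _ (-1) (Units.ext ?_)
        have h1 : z.val.1 = (w.val.1 + w.val.2) / 2 := by rw [h]
        have h2' : z.val.2 = w.val.1 := by rw [h]
        have hval : ((u2 ^ (-1 : ℤ) : (ZMod p)ˣ) : ZMod p) = (2 : ZMod p)⁻¹ := by
          rw [zpow_neg_one]
          simp [hu2]
        simp only [hdu, Units.val_mk0, Units.val_mul, hval, hm1, h1, h2',
          Units.val_neg, Units.val_one]
        field_simp
        ring
      · refine flip _ _ 1 (Units.ext ?_)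
        have h1 : z.val.1 = w.val.2 := by rw [h]
        have h2' : z.val.2 = 2 * w.val.1 - w.val.2 := by rw [h]
        simp [hdu, hu2, hm1, h1, h2']
        ring
    rcases hrel with h | h
    · exact (main u v h).symm
    · exact main v u h
  have coloring : (pairGraph p).Coloring Bool :=
    SimpleGraph.Coloring.mk c (fun {u v} h => key u v h)
  have := coloring.colorable
  simpa using this
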